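/- Let C be a nontrivial linear [n,k,3]_q code (minimum distance 3). Then C is perfect (i.e., C has covering radius 1, so C is a Hamming code) if and only if its dual code C⊥ is equidistant. -/

import Mathlib

open Finset

variable {F : Type*} [Field F] [Fintype F] [DecidableEq F]

/-- The Hamming distance from a vector to a code. -/
noncomputable def distToCode {ι : Type*} [Fintype ι] (C : Set (ι → F)) (x : ι → F) : ℕ :=
  sInf {d : ℕ | ∃ c ∈ C, hammingDist x c = d}

/-- The covering radius of a code: the maximal distance of a vector to the code. -/
noncomputable def coveringRadius {ι : Type*} [Fintype ι] (C : Set (ι → F)) : ℕ :=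
  sSup {d : ℕ | ∃ x : ι → F, distToCode C x = d}

/-- `C` has intersection numbers `b l` (number of neighbours one step further from the code)
and `c l` (number of neighbours one step closer to the code), for every `x` at distance `l`. -/
def HasIntersectionNumbers {ι : Type*} [Fintype ι] (C : Set (ι → F)) (b c : ℕ → ℕ) : Prop :=
  ∀ l : ℕ, ∀ x : ι → F, distToCode C x = l →
    Nat.card {y : ι → F | hammingDist x y = 1 ∧ distToCode C y = l + 1} = b l ∧
    Nat.card {y : ι → F | hammingDist x y = 1 ∧ distToCode C y + 1 = l} = c l

/-- A code is completely regular if it admits intersection numbers. -/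
def IsCompletelyRegular {ι : Type*} [Fintype ι] (C : Set (ι → F)) : Prop :=
  ∃ b c : ℕ → ℕ, HasIntersectionNumbers C b c

/-- The minimum distance of a code. -/
noncomputable def minDist {ι : Type*} [Fintype ι] (C : Set (ι → F)) : ℕ :=
  sInf {d : ℕ | ∃ x ∈ C, ∃ y ∈ C, x ≠ y ∧ hammingDist x y = d}

/-- A code is equidistant if any two distinct codewords are at the same Hamming distance. -/
def IsEquidistant {ι : Type*} [Fintype ι] (C : Set (ι → F)) : Prop :=
  ∃ d : ℕ, ∀ x ∈ C, ∀ y ∈ C, x ≠ y → hammingDist x y = d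

/-- The dual of a code, with respect to the standard bilinear form. -/
def dualSet {ι : Type*} [Fintype ι] (C : Set (ι → F)) : Set (ι → F) :=
  {y | ∀ x ∈ C, ∑ i, x i * y i = 0}

/-- A code of length `n` is antipodal if it contains a word of Hamming weight `n`. -/
def IsAntipodal {ι : Type*} [Fintype ι] (C : Set (ι → F)) : Prop :=
  ∃ v ∈ C, hammingNorm v = Fintype.card ι

/-- A monomial transformation: a coordinate permutation composed with multiplication of
each coordinate by a nonzero scalar. -/
def IsMonomialMap {ι : Type*} (φ : (ι → F) → (ι → F)) : Prop :=
  ∃ (π : Equiv.Perm ι) (s : ι → Fˣ), ∀ x i, φ x i = (s i : F) * x (π i)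

/-- Two codes are monomially equivalent if one is the image of the other under a bijection of
coordinates together with multiplication of each coordinate by a nonzero scalar. -/
def MonomiallyEquivalent {ι κ : Type*} (C : Set (ι → F)) (D : Set (κ → F)) : Prop :=
  ∃ (e : ι ≃ κ) (s : ι → Fˣ),
    (fun (x : ι → F) (j : κ) => (s (e.symm j) : F) * x (e.symm j)) '' C = D

/-- The orbit, under the action of `Aut C` on the cosets of `C`, of the coset of `v`
(realised as the union of all cosets in the orbit). -/
def cosetOrbit {ι : Type*} (C : Submodule F (ι → F)) (v : ι → F) : Set (ι → F) :=
  {w | ∃ φ : (ι → F) → (ι → F), IsMonomialMap φ ∧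
    φ '' (C : Set (ι → F)) = (C : Set (ι → F)) ∧ φ v - w ∈ C}

/-- The number of orbits of the action of `Aut C` on the cosets of `C`. -/
noncomputable def numCosetOrbits {ι : Type*} (C : Submodule F (ι → F)) : ℕ :=
  Nat.card (Set.range (cosetOrbit C))

/-- `H` is a `q`-ary Hamming code with parameter `m ≥ 2`: a perfect
`[(q^m-1)/(q-1), (q^m-1)/(q-1) - m, 3]_q` code with covering radius 1. -/
def IsHammingCode (m : ℕ) {nm : ℕ} (H : Submodule F (Fin nm → F)) : Prop :=
  2 ≤ m ∧ nm = (Fintype.card F ^ m - 1) / (Fintype.card F - 1) ∧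
  Module.finrank F H = nm - m ∧ minDist (H : Set (Fin nm → F)) = 3 ∧
  coveringRadius (H : Set (Fin nm → F)) = 1

/-- The extended code: append an overall parity-check coordinate. -/
def extendedCode {m : ℕ} (D : Set (Fin m → F)) : Set (Fin (m + 1) → F) :=
  {z | (fun i : Fin m => z i.castSucc) ∈ D ∧ ∑ i, z i = 0}

/-- Construction I(u): append `u` free coordinates to every codeword. -/
def appendCode (u : ℕ) {n : ℕ} (C : Set (Fin n → F)) : Set (Fin (n + u) → F) :=
  {z | ∃ c ∈ C, ∃ y : Fin u → F, z = Fin.append c y}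

/-- Construction II(ℓ): codewords are `ℓ`-tuples of blocks whose `λ`-weighted sum lies in `C`. -/
def repeatCode {n ℓ : ℕ} (lam : Fin ℓ → Fˣ) (C : Set (Fin n → F)) :
    Set (Fin ℓ × Fin n → F) :=
  {z | (fun j : Fin n => ∑ i : Fin ℓ, (lam i : F) * z (i, j)) ∈ C}

/-- The code `{(x₁|⋯|x_ℓ|y) : x₁+⋯+x_ℓ ∈ H, y free}` built from a code `H`. -/
def hammingRepeatCode {nm : ℕ} (ℓ u : ℕ) (H : Set (Fin nm → F)) :
    Set ((Fin ℓ × Fin nm) ⊕ Fin u → F) :=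
  {z | (fun j : Fin nm => ∑ i : Fin ℓ, z (Sum.inl (i, j))) ∈ H}


section PerfAuxSection
set_option linter.unusedSectionVars false
set_option maxHeartbeats 1000000
namespace PerfAux
open Module
variable {n : ℕ}



/-- standard pairing as a map to the dual -/
noncomputable def pairingMap (F : Type*) [Field F] (n : ℕ) :
    (Fin n → F) →ₗ[F] Module.Dual F (Fin n → F) :=
  LinearMap.mk₂ F (fun x y => ∑ i, x i * y i)
    (fun m₁ m₂ nn => by simp [add_mul, Finset.sum_add_distrib])
    (fun c m nn => by simp [Finset.mul_sum, mul_assoc])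
    (fun m n₁ n₂ => by simp [mul_add, Finset.sum_add_distrib])
    (fun c m nn => by simp [Finset.mul_sum]; ring_nf; simp [mul_assoc, mul_comm, mul_left_comm])

@[simp] lemma pairingMap_apply (x y : Fin n → F) :
    pairingMap F n x y = ∑ i, x i * y i := rfl

lemma pairingMap_injective : Function.Injective (pairingMap F n) := by
  rw [injective_iff_map_eq_zero]
  intro y hy
  funext i
  have := congrArg (fun f : Module.Dual F (Fin n → F) => f (Pi.single i 1)) hy
  simpa [Finset.sum_eq_single i, Pi.single_apply] using this

lemma pairingMap_surjective : Function.Surjective (pairingMap F n) := by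
  have h : Module.finrank F (Fin n → F) = Module.finrank F (Module.Dual F (Fin n → F)) :=
    (Subspace.dual_finrank_eq).symm
  exact (LinearMap.injective_iff_surjective_of_finrank_eq_finrank h).mp pairingMap_injective

noncomputable def dualSub (W : Submodule F (Fin n → F)) : Submodule F (Fin n → F) :=
  LinearMap.ker ((W.subtype.dualMap).comp (pairingMap F n))

lemma mem_dualSub {W : Submodule F (Fin n → F)} {y : Fin n → F} :
    y ∈ dualSub W ↔ ∀ x ∈ W, ∑ i, x i * y i = 0 := by
  constructor
  · intro h x hx
    have := congrArg (fun f => f ⟨x, hx⟩) (LinearMap.mem_ker.mp h)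
    simp only [LinearMap.comp_apply, LinearMap.dualMap_apply, Submodule.coe_subtype,
      LinearMap.zero_apply, pairingMap_apply] at this
    rw [← this]
    exact Finset.sum_congr rfl fun i _ => mul_comm _ _
  · intro h
    simp only [dualSub, LinearMap.mem_ker]
    ext ⟨x, hx⟩
    simp only [LinearMap.comp_apply, LinearMap.dualMap_apply, Submodule.coe_subtype,
      LinearMap.zero_apply, pairingMap_apply]
    rw [← h x hx]
    exact Finset.sum_congr rfl fun i _ => mul_comm _ _

lemma coe_dualSub (W : Submodule F (Fin n → F)) :
    (dualSub W : Set (Fin n → F)) = dualSet (W : Set (Fin n → F)) := by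
  ext y; exact mem_dualSub

lemma finrank_dualSub (W : Submodule F (Fin n → F)) :
    Module.finrank F (dualSub W) + Module.finrank F W = n := by
  have hsurj : Function.Surjective ((W.subtype.dualMap).comp (pairingMap F n)) :=
    (LinearMap.dualMap_surjective_of_injective W.injective_subtype).comp pairingMap_surjective
  have h := LinearMap.finrank_range_add_finrank_ker ((W.subtype.dualMap).comp (pairingMap F n))
  rw [LinearMap.range_eq_top.mpr hsurj, finrank_top, Subspace.dual_finrank_eq,
    Module.finrank_fin_fun] at h
  rw [dualSub]
  omega
set_option linter.all false

lemma dualSub_dualSub (W : Submodule F (Fin n → F)) : dualSub (dualSub W) = W := by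
  have hle : W ≤ dualSub (dualSub W) := by
    intro x hx
    rw [mem_dualSub]
    intro y hy
    rw [← mem_dualSub.mp hy x hx]
    exact Finset.sum_congr rfl fun i _ => mul_comm _ _
  have h1 := finrank_dualSub W
  have h2 := finrank_dualSub (dualSub W)
  exact (Submodule.eq_of_le_of_finrank_eq hle (by omega)).symm





lemma nat_card_eq (M : Type*) [AddCommGroup M] [Module F M] [Module.Finite F M] :
    Nat.card M = Fintype.card F ^ Module.finrank F M := by
  have : Finite M := Module.finite_of_finite F
  cases nonempty_fintype M
  rw [Nat.card_eq_fintype_card, card_eq_pow_finrank (K := F) (V := M)]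

lemma norm_single_le (i : Fin n) (a : F) : hammingNorm (Pi.single i a : Fin n → F) ≤ 1 := by
  calc hammingNorm (Pi.single i a : Fin n → F) ≤ ({i} : Finset (Fin n)).card := by
        apply Finset.card_le_card
        intro j hj
        simp only [hammingNorm, Finset.mem_filter, Finset.mem_univ, true_and] at hj
        simp only [Finset.mem_singleton]
        by_contra hne
        exact hj (Pi.single_eq_of_ne (M := fun _ => F) hne a)
    _ = 1 := Finset.card_singleton i

lemma norm_le_two {v : Fin n → F} (i j : Fin n) (h : ∀ l, l ≠ i → l ≠ j → v l = 0) :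
    hammingNorm v ≤ 2 := by
  calc hammingNorm v ≤ ({i, j} : Finset (Fin n)).card := by
        apply Finset.card_le_card
        intro l hl
        simp only [hammingNorm, Finset.mem_filter, Finset.mem_univ, true_and] at hl
        simp only [Finset.mem_insert, Finset.mem_singleton]
        by_contra hne
        push_neg at hne
        exact hl (h l hne.1 hne.2)
    _ ≤ 2 := Finset.card_le_two

lemma wt3 (C : Submodule F (Fin n → F)) (hd : minDist (C : Set (Fin n → F)) = 3) :
    ∀ c ∈ C, c ≠ 0 → 3 ≤ hammingNorm c := by
  intro c hc hc0
  have hmem : hammingNorm c ∈ {d : ℕ | ∃ x ∈ (C : Set (Fin n → F)), ∃ y ∈ (C : Set (Fin n → F)), x ≠ y ∧ hammingDist x y = d} :=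
    ⟨c, hc, 0, C.zero_mem, hc0, hammingDist_zero_right c⟩
  have := Nat.sInf_le hmem
  rw [minDist] at hd
  omega

lemma small_norm_structure {b : Fin n → F} (h : hammingNorm b ≤ 1) :
    b = 0 ∨ ∃ i : Fin n, ∃ a : F, a ≠ 0 ∧ b = Pi.single i a := by
  by_cases hb : b = 0
  · exact Or.inl hb
  · right
    obtain ⟨i, hi⟩ : ∃ i, b i ≠ 0 := by
      by_contra hno; push_neg at hno; exact hb (funext fun i => hno i)
    refine ⟨i, b i, hi, funext fun j => ?_⟩
    rcases eq_or_ne j i with rfl | hji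
    · simp
    · rw [Pi.single_eq_of_ne hji]
      by_contra hbj
      have h2 : ({j, i} : Finset (Fin n)) ⊆ Finset.filter (fun l => b l ≠ 0) Finset.univ := by
        intro l hl
        simp only [Finset.mem_insert, Finset.mem_singleton] at hl
        simp only [Finset.mem_filter, Finset.mem_univ, true_and]
        rcases hl with rfl | rfl
        · exact hbj
        · exact hi
      have := Finset.card_le_card h2
      rw [Finset.card_pair hji] at this
      simp only [hammingNorm] at h
      omega






noncomputable def ballVal : Option (Fin n × {a : F // a ≠ 0}) → (Fin n → F) :=
  fun t => t.elim 0 fun p => Pi.single p.1 p.2.1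

lemma norm_ballVal_le (t : Option (Fin n × {a : F // a ≠ 0})) : hammingNorm (ballVal t) ≤ 1 := by
  cases t with
  | none => simp [ballVal]
  | some p => exact norm_single_le p.1 p.2.1

lemma card_ballIndex :
    Nat.card (Option (Fin n × {a : F // a ≠ 0})) = 1 + n * (Fintype.card F - 1) := by
  have h : Fintype.card {a : F // a ≠ 0} = Fintype.card F - 1 := by
    rw [← Fintype.card_congr (unitsEquivNeZero (G₀ := F)), Fintype.card_units]
  rw [Nat.card_eq_fintype_card, Fintype.card_option, Fintype.card_prod, Fintype.card_fin, h]
  omega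

lemma ballVal_injective : Function.Injective (ballVal (F := F) (n := n)) := by
  intro t₁ t₂ h
  cases t₁ with
  | none => cases t₂ with
    | none => rfl
    | some p =>
      exfalso
      have := congrFun h p.1
      simp [ballVal] at this
      exact p.2.2 this.symm
  | some p => cases t₂ with
    | none =>
      exfalso
      have := congrFun h p.1
      simp [ballVal] at this
      exact p.2.2 this
    | some q =>
      rcases eq_or_ne p.1 q.1 with he | hne
      · have := congrFun h p.1
        simp only [ballVal, Option.elim] at this
        rw [Pi.single_eq_same, he, Pi.single_eq_same] at this
        congr 1
        exact Prod.ext he (Subtype.ext this)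
      · exfalso
        have := congrFun h p.1
        simp only [ballVal, Option.elim] at this
        rw [Pi.single_eq_same, Pi.single_eq_of_ne (M := fun _ => F) hne] at this
        exact p.2.2 this

lemma ballMk_injective (C : Submodule F (Fin n → F))
    (hwt : ∀ c ∈ C, c ≠ 0 → 3 ≤ hammingNorm c) :
    Function.Injective (fun t => Submodule.Quotient.mk (p := C) (ballVal t)) := by
  intro t₁ t₂ h
  simp only at h
  rw [Submodule.Quotient.eq] at h
  apply ballVal_injective
  by_contra hne
  have hdiff : ballVal t₁ - ballVal t₂ ≠ 0 := sub_ne_zero_of_ne hne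
  have h2 : hammingNorm (ballVal t₁ - ballVal t₂) ≤ 2 := by
    have := hammingDist_triangle (ballVal t₁) 0 (ballVal t₂)
    rw [hammingDist_comm, hammingDist_eq_hammingNorm, neg_add_eq_sub] at this
    simp only [hammingDist_zero_right, hammingDist_zero_left] at this
    have hb1 := norm_ballVal_le t₁
    have hb2 := norm_ballVal_le t₂
    omega
  have := hwt _ h hdiff
  omega

lemma near_iff_surjective (C : Submodule F (Fin n → F)) :
    (∀ v : Fin n → F, ∃ c ∈ C, hammingDist v c ≤ 1) ↔
      Function.Surjective (fun t => Submodule.Quotient.mk (p := C) (ballVal t)) := by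
  constructor
  · intro h q
    obtain ⟨v, rfl⟩ := Submodule.Quotient.mk_surjective C q
    obtain ⟨c, hc, hle⟩ := h v
    have hb : hammingNorm (v - c) ≤ 1 := by rwa [← neg_add_eq_sub, ← hammingDist_eq_hammingNorm, hammingDist_comm]
    rcases small_norm_structure hb with h0 | ⟨i, a, ha, hba⟩
    · refine ⟨none, ?_⟩
      simp only [ballVal, Option.elim]
      rw [Submodule.Quotient.eq]
      rw [sub_eq_zero] at h0
      simpa [h0] using hc
    · refine ⟨some (i, ⟨a, ha⟩), ?_⟩
      simp only [ballVal, Option.elim]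
      rw [Submodule.Quotient.eq, ← hba]
      simpa using C.neg_mem hc
  · intro h v
    obtain ⟨t, ht⟩ := h (Submodule.Quotient.mk v)
    rw [Submodule.Quotient.eq] at ht
    refine ⟨v - ballVal t, ?_, ?_⟩
    · have := C.neg_mem ht
      simpa using this
    · rw [hammingDist_comm, hammingDist_eq_hammingNorm, neg_add_eq_sub, sub_sub_cancel]
      exact norm_ballVal_le t

lemma cov_iff_card (C : Submodule F (Fin n → F))
    (hwt : ∀ c ∈ C, c ≠ 0 → 3 ≤ hammingNorm c)
    (hne : ∃ v : Fin n → F, v ∉ C) :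
    coveringRadius (C : Set (Fin n → F)) = 1 ↔
      Nat.card ((Fin n → F) ⧸ C) = 1 + n * (Fintype.card F - 1) := by
  have hSne : ∀ v : Fin n → F, {d : ℕ | ∃ c ∈ (C : Set (Fin n → F)), hammingDist v c = d}.Nonempty :=
    fun v => ⟨hammingDist v 0, 0, C.zero_mem, rfl⟩
  have hdle : ∀ v : Fin n → F, distToCode (C : Set (Fin n → F)) v ≤ n := by
    intro v
    refine le_trans (Nat.sInf_le ⟨0, C.zero_mem, rfl⟩) ?_
    simpa using (hammingDist_le_card_fintype (x := v) (y := (0 : Fin n → F)))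
  have hbdd : BddAbove {d : ℕ | ∃ x : Fin n → F, distToCode (C : Set (Fin n → F)) x = d} :=
    ⟨n, fun d ⟨x, hx⟩ => hx ▸ hdle x⟩
  have hmem_rad : ∀ v : Fin n → F,
      distToCode (C : Set (Fin n → F)) v ≤ coveringRadius (C : Set (Fin n → F)) :=
    fun v => le_csSup hbdd ⟨v, rfl⟩
  have hex : ∀ v : Fin n → F, ∃ c ∈ (C : Set (Fin n → F)),
      hammingDist v c = distToCode (C : Set (Fin n → F)) v :=
    fun v => Nat.sInf_mem (hSne v)
  have step1 : coveringRadius (C : Set (Fin n → F)) = 1 ↔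
      ∀ v : Fin n → F, ∃ c ∈ C, hammingDist v c ≤ 1 := by
    constructor
    · intro h v
      obtain ⟨c, hc, hdc⟩ := hex v
      have := hmem_rad v
      rw [h] at this
      exact ⟨c, hc, by omega⟩
    · intro h
      apply le_antisymm
      · refine csSup_le ⟨distToCode (C : Set (Fin n → F)) 0, ⟨0, rfl⟩⟩ ?_
        rintro d ⟨x, rfl⟩
        obtain ⟨c, hc, hle⟩ := h x
        exact le_trans (Nat.sInf_le ⟨c, hc, rfl⟩) hle
      · obtain ⟨v, hv⟩ := hne
        refine le_trans ?_ (hmem_rad v)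
        rcases Nat.eq_zero_or_pos (distToCode (C : Set (Fin n → F)) v) with h0 | h1
        · exfalso
          obtain ⟨c, hc, hdc⟩ := hex v
          rw [h0] at hdc
          rw [hammingDist_eq_zero] at hdc
          exact hv (hdc ▸ hc)
        · exact h1
  rw [step1, near_iff_surjective C]
  have hinj := ballMk_injective C hwt
  constructor
  · intro hsurj
    have h1 := Nat.card_le_card_of_injective _ hinj
    have h2 := Nat.card_le_card_of_surjective _ hsurj
    rw [card_ballIndex] at h1 h2
    omega
  · intro hcard
    rw [← card_ballIndex] at hcard
    have : Finite ((Fin n → F) ⧸ C) := Quotient.finite _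
    have := (Nat.bijective_iff_injective_and_card _).mpr ⟨hinj, by rw [Nat.card_eq_fintype_card, Nat.card_eq_fintype_card] at hcard ⊢; exact hcard.symm⟩
    exact this.surjective







lemma card_ne_zero' (M : Type*) [Zero M] [Finite M] :
    Nat.card {x : M // x ≠ 0} = Nat.card M - 1 := by
  classical
  cases nonempty_fintype M
  rw [Nat.card_eq_fintype_card, Nat.card_eq_fintype_card,
    Fintype.card_subtype_compl (· = (0 : M)), Fintype.card_subtype_eq (0 : M)]

section Functionals
variable (D : Submodule F (Fin n → F))

/-- evaluation functional at coordinate `i` -/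
noncomputable def coordFn (i : Fin n) : D →ₗ[F] F :=
  (LinearMap.proj i).comp D.subtype

@[simp] lemma coordFn_apply (i : Fin n) (y : D) : coordFn D i y = (y : Fin n → F) i := rfl

variable {D}

lemma card_ker_one {f : D →ₗ[F] F} (hf : f ≠ 0) :
    Nat.card {y : D // f y = 0} = Fintype.card F ^ (Module.finrank F D - 1) := by
  have hsurj : Function.Surjective f := LinearMap.surjective_of_ne_zero hf
  have hrank := LinearMap.finrank_range_add_finrank_ker f
  rw [LinearMap.range_eq_top.mpr hsurj, finrank_top, Module.finrank_self] at hrank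
  have e : {y : D // f y = 0} ≃ LinearMap.ker f :=
    Equiv.subtypeEquivRight (fun y => (LinearMap.mem_ker).symm)
  rw [Nat.card_congr e, nat_card_eq (F := F)]
  congr 1
  omega

lemma card_ker_two {f g : D →ₗ[F] F}
    (hind : ∀ b c : F, (∀ y : D, b * f y + c * g y = 0) → b = 0 ∧ c = 0) :
    Nat.card {y : D // f y = 0 ∧ g y = 0} = Fintype.card F ^ (Module.finrank F D - 2) := by
  set Φ : D →ₗ[F] F × F := f.prod g with hΦ
  have hsurj : Function.Surjective Φ := by
    rw [← LinearMap.range_eq_top]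
    by_contra hne
    obtain ⟨ψ, hψ0, hψ⟩ := (LinearMap.range Φ).exists_dual_map_eq_bot_of_lt_top
      (lt_top_iff_ne_top.mpr hne) inferInstance
    have hvan : ∀ v ∈ LinearMap.range Φ, ψ v = 0 := by
      intro v hv
      have : ψ v ∈ Submodule.map ψ (LinearMap.range Φ) := Submodule.mem_map_of_mem hv
      rw [hψ] at this
      simpa using this
    have hdecomp : ∀ u v : F, ψ (u, v) = u * ψ (1, 0) + v * ψ (0, 1) := by
      intro u v
      have : (u, v) = u • ((1 : F), (0 : F)) + v • ((0 : F), (1 : F)) := by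
        simp [Prod.ext_iff]
      rw [this, map_add, map_smul, map_smul, smul_eq_mul, smul_eq_mul]
    have hbc := hind (ψ (1, 0)) (ψ (0, 1)) (fun y => by
      have := hvan (Φ y) ⟨y, rfl⟩
      rw [hΦ] at this
      simp only [LinearMap.prod_apply, Function.prod] at this
      rw [hdecomp] at this
      linear_combination this)
    apply hψ0
    apply LinearMap.ext
    intro v
    have hv : v = (v.1, v.2) := rfl
    rw [hv, hdecomp, hbc.1, hbc.2]
    simp
  have hrank := LinearMap.finrank_range_add_finrank_ker Φ
  rw [LinearMap.range_eq_top.mpr hsurj, finrank_top] at hrank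
  have hFF : Module.finrank F (F × F) = 2 := by
    simp [Module.finrank_prod]
  rw [hFF] at hrank
  have e : {y : D // f y = 0 ∧ g y = 0} ≃ LinearMap.ker Φ := by
    refine Equiv.subtypeEquivRight (fun y => ?_)
    rw [LinearMap.mem_ker, hΦ]
    simp [LinearMap.prod_apply, Prod.ext_iff]
  rw [Nat.card_congr e, nat_card_eq (F := F)]
  congr 1
  omega

end Functionals



lemma sum_mul_single (y : Fin n → F) (i : Fin n) (a : F) :
    ∑ j, y j * (Pi.single i a : Fin n → F) j = y i * a := by
  rw [Finset.sum_eq_single i]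
  · rw [Pi.single_eq_same]
  · intro j _ hj
    rw [Pi.single_eq_of_ne (M := fun _ => F) hj, mul_zero]
  · intro h
    exact absurd (Finset.mem_univ i) h

variable (D : Submodule F (Fin n → F)) [Fintype ↥D]

/-- number of zero coordinates -/
def zer (y : D) : ℕ := (Finset.univ.filter fun i => (y : Fin n → F) i = 0).card

lemma zer_add_norm (y : D) : zer D y + hammingNorm (y : Fin n → F) = n := by
  have h := Finset.card_filter_add_card_filter_not
    (s := Finset.univ) (p := fun i : Fin n => (y : Fin n → F) i = 0)
  rw [Finset.card_univ, Fintype.card_fin] at h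
  have h2 : hammingNorm (y : Fin n → F) =
      (Finset.univ.filter fun i : Fin n => ¬ (y : Fin n → F) i = 0).card := by
    simp [hammingNorm, Ne]
  rw [zer, h2]
  convert h using 3

lemma zer_zero : zer D 0 = n := by
  simp [zer]

variable {D}

lemma sum_zer (hφne : ∀ i : Fin n, coordFn D i ≠ 0) :
    ∑ y : D, zer D y = n * Fintype.card F ^ (Module.finrank F D - 1) := by
  have hstep : ∀ y : D, zer D y = ∑ i : Fin n, if (y : Fin n → F) i = 0 then 1 else 0 :=
    fun y => Finset.card_filter _ _
  rw [Finset.sum_congr rfl (fun y _ => hstep y), Finset.sum_comm]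
  have hinner : ∀ i : Fin n,
      (∑ y : D, if (y : Fin n → F) i = 0 then 1 else 0)
        = Fintype.card F ^ (Module.finrank F D - 1) := by
    intro i
    rw [← Finset.card_filter, ← Fintype.card_subtype]
    rw [← Nat.card_eq_fintype_card]
    exact card_ker_one (hφne i)
  rw [Finset.sum_congr rfl (fun i _ => hinner i), Finset.sum_const, Finset.card_univ,
    Fintype.card_fin, smul_eq_mul]

lemma sum_zer_sq (hφne : ∀ i : Fin n, coordFn D i ≠ 0)
    (hind : ∀ i j : Fin n, i ≠ j → ∀ b c : F,
      (∀ y : D, b * (y : Fin n → F) i + c * (y : Fin n → F) j = 0) → b = 0 ∧ c = 0) :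
    ∑ y : D, zer D y * zer D y =
      n * Fintype.card F ^ (Module.finrank F D - 1)
        + n * (n - 1) * Fintype.card F ^ (Module.finrank F D - 2) := by
  have hstep : ∀ y : D, zer D y * zer D y =
      ∑ i : Fin n, ∑ j : Fin n,
        if ((y : Fin n → F) i = 0 ∧ (y : Fin n → F) j = 0) then 1 else 0 := by
    intro y
    rw [show zer D y = ∑ i : Fin n, if (y : Fin n → F) i = 0 then 1 else 0 from
      Finset.card_filter _ _]
    rw [Finset.sum_mul_sum]
    refine Finset.sum_congr rfl fun i _ => Finset.sum_congr rfl fun j _ => ?_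
    by_cases h1 : (y : Fin n → F) i = 0 <;> by_cases h2 : (y : Fin n → F) j = 0 <;>
      simp [h1, h2]
  rw [Finset.sum_congr rfl (fun y _ => hstep y), Finset.sum_comm]
  have hswap : ∀ i : Fin n,
      (∑ y : D, ∑ j : Fin n, if ((y : Fin n → F) i = 0 ∧ (y : Fin n → F) j = 0) then 1 else 0)
      = ∑ j : Fin n, ∑ y : D,
          if ((y : Fin n → F) i = 0 ∧ (y : Fin n → F) j = 0) then 1 else 0 :=
    fun i => Finset.sum_comm
  rw [Finset.sum_congr rfl (fun i _ => hswap i)]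
  have hinner : ∀ i j : Fin n,
      (∑ y : D, if ((y : Fin n → F) i = 0 ∧ (y : Fin n → F) j = 0) then 1 else 0)
      = if j = i then Fintype.card F ^ (Module.finrank F D - 1)
          else Fintype.card F ^ (Module.finrank F D - 2) := by
    intro i j
    rw [← Finset.card_filter, ← Fintype.card_subtype, ← Nat.card_eq_fintype_card]
    rcases eq_or_ne j i with rfl | hne
    · rw [if_pos rfl]
      have e : {y : D // (y : Fin n → F) j = 0 ∧ (y : Fin n → F) j = 0}
          ≃ {y : D // coordFn D j y = 0} :=
        Equiv.subtypeEquivRight (fun y => by simp)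
      rw [Nat.card_congr e]
      exact card_ker_one (hφne j)
    · rw [if_neg hne]
      have e : {y : D // (y : Fin n → F) i = 0 ∧ (y : Fin n → F) j = 0}
          ≃ {y : D // coordFn D i y = 0 ∧ coordFn D j y = 0} :=
        Equiv.subtypeEquivRight (fun y => by simp)
      rw [Nat.card_congr e]
      exact card_ker_two (fun b c h => hind i j (fun h' => hne (h'.symm)) b c
        (fun y => by simpa using h y))
  rw [Finset.sum_congr rfl (fun i _ => Finset.sum_congr rfl (fun j _ => hinner i j))]
  have hrow : ∀ i : Fin n,
      (∑ j : Fin n, if j = i then Fintype.card F ^ (Module.finrank F D - 1)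
          else Fintype.card F ^ (Module.finrank F D - 2))
      = Fintype.card F ^ (Module.finrank F D - 1)
        + (n - 1) * Fintype.card F ^ (Module.finrank F D - 2) := by
    intro i
    rw [← Finset.add_sum_erase Finset.univ _ (Finset.mem_univ i)]
    congr 1
    · exact if_pos rfl
    · rw [Finset.sum_congr rfl (fun j hj => if_neg (Finset.ne_of_mem_erase hj)),
        Finset.sum_const, Finset.card_erase_of_mem (Finset.mem_univ i), Finset.card_univ,
        Fintype.card_fin, smul_eq_mul]
  rw [Finset.sum_congr rfl (fun i _ => hrow i), Finset.sum_const, Finset.card_univ,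
    Fintype.card_fin, smul_eq_mul, mul_add, mul_assoc]


lemma count_arith (q N t m : ℕ) (hq : 2 ≤ q) (hm : 2 ≤ m) (hn : 1 ≤ N)
    (E1 : N + (q ^ m - 1) * t = N * q ^ (m - 1))
    (E2 : N * N + (q ^ m - 1) * (t * t) = N * q ^ (m - 1) + N * (N - 1) * q ^ (m - 2)) :
    q ^ m = 1 + N * (q - 1) := by
  obtain ⟨s, rfl⟩ : ∃ s, m = s + 2 := ⟨m - 2, by omega⟩
  rw [show s + 2 - 2 = s from by omega] at E2
  rw [show s + 2 - 1 = s + 1 from by omega] at E1 E2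
  have hq1 : 1 ≤ q ^ (s + 2) := Nat.one_le_pow _ _ (by omega)
  zify [hq1, hn] at E1 E2
  zify [show 1 ≤ q from by omega]
  have hps1 : ((q : ℤ)) ^ (s + 1) = (q : ℤ) ^ s * q := pow_succ _ _
  have hps2 : ((q : ℤ)) ^ (s + 2) = (q : ℤ) ^ s * q * q := by rw [pow_succ, pow_succ]
  rw [hps2] at E1 E2 ⊢
  set P := (q : ℤ) ^ s with hPdef
  have hQ2 : (2 : ℤ) ≤ (q : ℤ) := by exact_mod_cast hq
  have hP1 : (1 : ℤ) ≤ P := one_le_pow₀ (by omega)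
  have hN1 : (1 : ℤ) ≤ (N : ℤ) := by exact_mod_cast hn
  have hN0 : (N : ℤ) ≠ 0 := by omega
  have e1' : (P * q * q - 1) * t = (N : ℤ) * (P * q - 1) := by linear_combination E1
  have key1 : (P * q * q - 1) * t * ((t : ℤ) - 1) = (N : ℤ) * ((N : ℤ) - 1) * (P - 1) := by
    linear_combination E2 - E1
  have key1' : (N : ℤ) * ((P * q - 1) * ((t : ℤ) - 1))
      = (N : ℤ) * (((N : ℤ) - 1) * (P - 1)) := by
    linear_combination key1 - ((t : ℤ) - 1) * e1'
  have key2 : (P * q - 1) * ((t : ℤ) - 1) = ((N : ℤ) - 1) * (P - 1) :=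
    mul_left_cancel₀ hN0 key1'
  have hPQ0 : P * ((q : ℤ) - 1) ≠ 0 := by nlinarith
  have hbig : ((N : ℤ) * ((q : ℤ) - 1)) * (P * ((q : ℤ) - 1))
      = (P * q * q - 1) * (P * ((q : ℤ) - 1)) := by
    linear_combination (P * q * q - 1) * key2 - (P * q - 1) * e1'
  have hcancel := mul_right_cancel₀ hPQ0 hbig
  linear_combination -hcancel


lemma equid_to_card (D : Submodule F (Fin n → F)) [Fintype ↥D]
    (hm2 : 2 ≤ Module.finrank F ↥D) (hn : 1 ≤ n)
    (hφne : ∀ i : Fin n, coordFn D i ≠ 0)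
    (hind : ∀ i j : Fin n, i ≠ j → ∀ b c : F,
      (∀ y : ↥D, b * (y : Fin n → F) i + c * (y : Fin n → F) j = 0) → b = 0 ∧ c = 0)
    (hequid : ∃ d : ℕ, ∀ x ∈ (D : Set (Fin n → F)), ∀ y ∈ (D : Set (Fin n → F)),
      x ≠ y → hammingDist x y = d) :
    Fintype.card F ^ (Module.finrank F ↥D) = 1 + n * (Fintype.card F - 1) := by
  obtain ⟨d, hdist⟩ := hequid
  have hq : 2 ≤ Fintype.card F := Fintype.one_lt_card
  have hzconst : ∀ y : ↥D, y ≠ 0 → zer D y = n - d ∧ d ≤ n := by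
    intro y hy
    have hyne : (y : Fin n → F) ≠ 0 := fun h0 => hy (Submodule.coe_eq_zero.mp h0)
    have hdy := hdist (y : Fin n → F) y.2 0 D.zero_mem hyne
    rw [hammingDist_zero_right] at hdy
    have hz := zer_add_norm D y
    omega
  have hcardD : Fintype.card ↥D = Fintype.card F ^ (Module.finrank F ↥D) :=
    card_eq_pow_finrank (K := F)
  have hsplit1 : ∑ y : ↥D, zer D y
      = n + (Fintype.card F ^ (Module.finrank F ↥D) - 1) * (n - d) := by
    rw [← Finset.add_sum_erase Finset.univ _ (Finset.mem_univ (0 : ↥D)), zer_zero]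
    congr 1
    rw [Finset.sum_congr rfl (fun y hy => (hzconst y (Finset.ne_of_mem_erase hy)).1),
      Finset.sum_const, Finset.card_erase_of_mem (Finset.mem_univ _), Finset.card_univ,
      hcardD, smul_eq_mul]
  have hsplit2 : ∑ y : ↥D, zer D y * zer D y
      = n * n + (Fintype.card F ^ (Module.finrank F ↥D) - 1) * ((n - d) * (n - d)) := by
    rw [← Finset.add_sum_erase Finset.univ _ (Finset.mem_univ (0 : ↥D)), zer_zero]
    congr 1
    rw [Finset.sum_congr rfl (fun y hy => by
        rw [(hzconst y (Finset.ne_of_mem_erase hy)).1]),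
      Finset.sum_const, Finset.card_erase_of_mem (Finset.mem_univ _), Finset.card_univ,
      hcardD, smul_eq_mul]
  have E1 := hsplit1.symm.trans (sum_zer hφne)
  have E2 := hsplit2.symm.trans (sum_zer_sq hφne hind)
  exact count_arith (Fintype.card F) n (n - d) (Module.finrank F ↥D) hq hm2 hn E1 E2

lemma card_to_equid (D : Submodule F (Fin n → F)) [Fintype ↥D]
    (hm2 : 2 ≤ Module.finrank F ↥D)
    (hφne : ∀ i : Fin n, coordFn D i ≠ 0)
    (hind : ∀ i j : Fin n, i ≠ j → ∀ b c : F,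
      (∀ y : ↥D, b * (y : Fin n → F) i + c * (y : Fin n → F) j = 0) → b = 0 ∧ c = 0)
    (hcard : Fintype.card F ^ (Module.finrank F ↥D) = 1 + n * (Fintype.card F - 1)) :
    ∃ d : ℕ, ∀ x ∈ (D : Set (Fin n → F)), ∀ y ∈ (D : Set (Fin n → F)),
      x ≠ y → hammingDist x y = d := by
  classical
  have hq : 2 ≤ Fintype.card F := Fintype.one_lt_card
  have hsmulne : ∀ (p : Fin n × {a : F // a ≠ 0}), (p.2 : F) • coordFn D p.1 ≠ 0 :=
    fun p => smul_ne_zero p.2.2 (hφne p.1)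
  set Φ : Fin n × {a : F // a ≠ 0} → {f : Module.Dual F ↥D // f ≠ 0} :=
    fun p => ⟨(p.2 : F) • coordFn D p.1, hsmulne p⟩ with hΦdef
  have hΦapp : ∀ p : Fin n × {a : F // a ≠ 0}, ∀ y : ↥D,
      ((Φ p : Module.Dual F ↥D)) y = (p.2 : F) * (y : Fin n → F) p.1 := by
    intro p y; simp [hΦdef]
  have hΦinj : Function.Injective Φ := by
    rintro ⟨i, a⟩ ⟨j, b⟩ h
    rw [Subtype.ext_iff] at h
    simp only [hΦdef] at h
    rcases eq_or_ne i j with rfl | hne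
    · have hab : ((a : F) - b) • coordFn D i = 0 := (sub_smul (a : F) (b : F) (coordFn D i)).trans (sub_eq_zero.mpr h)
      rcases smul_eq_zero.mp hab with h0 | h0
      · have : (a : F) = b := by
          have := sub_eq_zero.mp h0
          exact this
        simp [Prod.ext_iff, Subtype.ext_iff, this]
      · exact absurd h0 (hφne i)
    · exfalso
      have hbc := hind i j hne (a : F) (-(b : F)) (fun y => by
        have happ := congrArg (fun f : Module.Dual F ↥D => f y) h
        simp only [LinearMap.smul_apply, coordFn_apply, smul_eq_mul] at happ
        linear_combination happ)
      exact a.2 hbc.1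
  have hDfin : Finite (Module.Dual F ↥D) := Module.finite_of_finite F
  have hcard1 : Nat.card {f : Module.Dual F ↥D // f ≠ 0}
      = Fintype.card F ^ (Module.finrank F ↥D) - 1 := by
    rw [card_ne_zero', nat_card_eq (F := F), Subspace.dual_finrank_eq]
  have hcard2 : Nat.card (Fin n × {a : F // a ≠ 0}) = n * (Fintype.card F - 1) := by
    rw [Nat.card_eq_fintype_card, Fintype.card_prod, Fintype.card_fin,
      ← Fintype.card_congr (unitsEquivNeZero (G₀ := F)), Fintype.card_units]
  have hΦbij : Function.Bijective Φ := by
    rw [Nat.bijective_iff_injective_and_card]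
    refine ⟨hΦinj, ?_⟩
    rw [hcard1, hcard2]
    omega
  refine ⟨n - (Fintype.card F ^ (Module.finrank F ↥D - 1) - 1) / (Fintype.card F - 1), ?_⟩
  intro x hx y hy hxy
  have hxyD : x - y ∈ D := D.sub_mem hx hy
  have hne0 : x - y ≠ 0 := sub_ne_zero_of_ne hxy
  rw [hammingDist_comm, hammingDist_eq_hammingNorm, neg_add_eq_sub]
  suffices h : ∀ w : ↥D, (w : Fin n → F) ≠ 0 → hammingNorm (w : Fin n → F)
      = n - (Fintype.card F ^ (Module.finrank F ↥D - 1) - 1) / (Fintype.card F - 1) from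
    h ⟨x - y, hxyD⟩ hne0
  intro w hw
  set ev : Module.Dual F (Module.Dual F ↥D) := Module.Dual.eval F ↥D w with hevdef
  have hev_ne : ev ≠ 0 := by
    intro h0
    apply hw
    have hzero : w = 0 := (Module.forall_dual_apply_eq_zero_iff F w).mp (fun φ => by
      have := congrArg (fun f : Module.Dual F (Module.Dual F ↥D) => f φ) h0
      simpa [hevdef, Module.Dual.eval_apply] using this)
    rw [hzero]; rfl
  have hkercard : Nat.card {f : Module.Dual F ↥D // f ≠ 0 ∧ f w = 0}
      = Fintype.card F ^ (Module.finrank F ↥D - 1) - 1 := by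
    have e1 : {f : Module.Dual F ↥D // f ≠ 0 ∧ f w = 0}
        ≃ {g : LinearMap.ker ev // g ≠ 0} :=
      { toFun := fun f => ⟨⟨f.1, by
          rw [LinearMap.mem_ker, hevdef, Module.Dual.eval_apply]; exact f.2.2⟩,
          fun h0 => f.2.1 (by simpa [Subtype.ext_iff] using h0)⟩
        invFun := fun g => ⟨g.1.1, fun h0 => g.2 (Subtype.ext (by simpa using h0)),
          LinearMap.mem_ker.mp g.1.2⟩
        left_inv := fun f => rfl
        right_inv := fun g => rfl }
    rw [Nat.card_congr e1, card_ne_zero', nat_card_eq (F := F)]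
    have hsurj := LinearMap.surjective_of_ne_zero hev_ne
    have hrk := LinearMap.finrank_range_add_finrank_ker ev
    rw [LinearMap.range_eq_top.mpr hsurj, finrank_top, Module.finrank_self,
      Subspace.dual_finrank_eq] at hrk
    have hker : Module.finrank F (LinearMap.ker ev) = Module.finrank F ↥D - 1 := by omega
    rw [hker]
  have etrans : {p : Fin n × {a : F // a ≠ 0} // (w : Fin n → F) p.1 = 0}
      ≃ {f : Module.Dual F ↥D // f ≠ 0 ∧ f w = 0} := by
    refine (Equiv.subtypeEquiv (Equiv.ofBijective Φ hΦbij) (fun p => ?_)).trans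
      (Equiv.subtypeSubtypeEquivSubtypeInter _ _)
    constructor
    · intro h0
      show ((Φ p : Module.Dual F ↥D)) w = 0
      rw [hΦapp, h0, mul_zero]
    · intro h0
      have := hΦapp p w
      rw [show ((Φ p : Module.Dual F ↥D)) w = 0 from h0] at this
      rcases mul_eq_zero.mp this.symm with h1 | h1
      · exact absurd h1 p.2.2
      · exact h1
  have eprod : {p : Fin n × {a : F // a ≠ 0} // (w : Fin n → F) p.1 = 0}
      ≃ {i : Fin n // (w : Fin n → F) i = 0} × {a : F // a ≠ 0} :=
    { toFun := fun p => (⟨p.1.1, p.2⟩, p.1.2)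
      invFun := fun q => ⟨(q.1.1, q.2), q.1.2⟩
      left_inv := fun p => rfl
      right_inv := fun q => rfl }
  have hzw : zer D w * (Fintype.card F - 1)
      = Fintype.card F ^ (Module.finrank F ↥D - 1) - 1 := by
    rw [← hkercard, ← Nat.card_congr etrans, Nat.card_congr eprod, Nat.card_prod]
    congr 1
    · rw [Nat.card_eq_fintype_card, Fintype.card_subtype]; rfl
    · rw [Nat.card_eq_fintype_card,
        ← Fintype.card_congr (unitsEquivNeZero (G₀ := F)), Fintype.card_units]
  have hdiv : (Fintype.card F ^ (Module.finrank F ↥D - 1) - 1) / (Fintype.card F - 1)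
      = zer D w := by
    rw [← hzw]
    exact Nat.mul_div_cancel _ (by omega)
  have hzn := zer_add_norm D w
  omega


end PerfAux
end PerfAuxSection

/-- a nontrivial linear code with minimum distance 3 is perfect (covering
radius 1, i.e. a Hamming code) iff its dual is equidistant. -/
theorem perfect_iff_dual_equidistant
    {F : Type*} [Field F] [Fintype F] [DecidableEq F] {n k : ℕ}
    (C : Submodule F (Fin n → F))
    (hk : Module.finrank F C = k)
    (hk2 : 2 ≤ k) (hkn : k + 2 ≤ n)
    (hd : minDist (C : Set (Fin n → F)) = 3) :
    coveringRadius (C : Set (Fin n → F)) = 1 ↔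
      IsEquidistant (dualSet (C : Set (Fin n → F))) := by
  classical
  have hq : 2 ≤ Fintype.card F := Fintype.one_lt_card
  have hwt : ∀ c ∈ C, c ≠ 0 → 3 ≤ hammingNorm c := PerfAux.wt3 C hd
  have hne : ∃ v : Fin n → F, v ∉ C := by
    by_contra h
    push_neg at h
    have htop : C = ⊤ := Submodule.eq_top_iff'.mpr h
    rw [htop, finrank_top, Module.finrank_fin_fun] at hk
    omega
  set D := PerfAux.dualSub C with hDdef
  letI : Fintype ↥D := Fintype.ofFinite _
  have hrankD : Module.finrank F ↥D + k = n := by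
    rw [← hk]; exact PerfAux.finrank_dualSub C
  have hm2 : 2 ≤ Module.finrank F ↥D := by omega
  have hCdd : PerfAux.dualSub D = C := PerfAux.dualSub_dualSub C
  have hφne : ∀ i : Fin n, PerfAux.coordFn D i ≠ 0 := by
    intro i h0
    have hall : ∀ y : ↥D, (y : Fin n → F) i = 0 := by
      intro y
      have := congrArg (fun f : ↥D →ₗ[F] F => f y) h0
      simpa using this
    have hmem : (Pi.single i 1 : Fin n → F) ∈ PerfAux.dualSub D := by
      rw [PerfAux.mem_dualSub]
      intro x hx
      rw [PerfAux.sum_mul_single, show x i = 0 from hall ⟨x, hx⟩, zero_mul]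
    rw [hCdd] at hmem
    have hne0 : (Pi.single i 1 : Fin n → F) ≠ 0 := by
      intro h1
      have := congrFun h1 i
      rw [Pi.single_eq_same] at this
      exact one_ne_zero this
    have h3 := hwt _ hmem hne0
    have h4 := PerfAux.norm_single_le i (1 : F)
    omega
  have hind : ∀ i j : Fin n, i ≠ j → ∀ b c : F,
      (∀ y : ↥D, b * (y : Fin n → F) i + c * (y : Fin n → F) j = 0) → b = 0 ∧ c = 0 := by
    intro i j hij b c hbc
    by_contra hcon
    set v : Fin n → F := Pi.single i b + Pi.single j c with hv
    have hmem : v ∈ PerfAux.dualSub D := by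
      rw [PerfAux.mem_dualSub]
      intro x hx
      have hsum : ∑ l, x l * v l = x i * b + x j * c := by
        simp only [hv, Pi.add_apply, mul_add, Finset.sum_add_distrib]
        rw [PerfAux.sum_mul_single, PerfAux.sum_mul_single]
      rw [hsum]
      have hxy : b * x i + c * x j = 0 := hbc ⟨x, hx⟩
      linear_combination hxy
    rw [hCdd] at hmem
    have hvne : v ≠ 0 := by
      intro h0
      have hvi : b = 0 := by
        have h1 := congrFun h0 i
        rw [hv] at h1
        simp only [Pi.add_apply, Pi.single_eq_same, Pi.zero_apply] at h1
        rwa [Pi.single_eq_of_ne (M := fun _ => F) hij, add_zero] at h1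
      have hvj : c = 0 := by
        have h1 := congrFun h0 j
        rw [hv] at h1
        simp only [Pi.add_apply, Pi.single_eq_same, Pi.zero_apply] at h1
        rwa [Pi.single_eq_of_ne (M := fun _ => F) hij.symm, zero_add] at h1
      exact hcon ⟨hvi, hvj⟩
    have hle2 := PerfAux.norm_le_two i j (v := v) (fun l hli hlj => by
      simp [hv, Pi.single_eq_of_ne (M := fun _ => F) hli,
        Pi.single_eq_of_ne (M := fun _ => F) hlj])
    have h3 := hwt _ hmem hvne
    omega
  rw [PerfAux.cov_iff_card C hwt hne]
  have hquot : Nat.card ((Fin n → F) ⧸ C) = Fintype.card F ^ Module.finrank F ↥D := by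
    rw [PerfAux.nat_card_eq (F := F)]
    congr 1
    have h2 := Submodule.finrank_quotient_add_finrank C
    rw [Module.finrank_fin_fun, hk] at h2
    omega
  rw [hquot]
  have hDset : dualSet (C : Set (Fin n → F)) = (D : Set (Fin n → F)) :=
    (PerfAux.coe_dualSub C).symm
  rw [hDset]
  constructor
  · intro hcard
    exact PerfAux.card_to_equid D hm2 hφne hind hcard
  · intro hequid
    exact PerfAux.equid_to_card D hm2 (by omega) hφne hind hequid
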